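/- Let 0<a<1, c_u∈ℝ, σ_e²>0, and R_u(τ)=c_u²σ_e²·a^{|τ|}·[2/(1−a²)³+(|τ|−1)/(1−a²)²] for τ∈ℤ (the autocovariance of the filter H(q)=c_u/(1−aq⁻¹)² driven by white noise of variance σ_e²). Then for every integer m≥0, the bilateral sum Σ_{τ=−∞}^{∞} R_u(τ)R_u(τ+m) = (c_u⁴σ_e⁴/(1−a²)⁶)·f_Γ(m), where f_Γ(x) = [2a^{x+2}/(1−a²)]·[(1−x)a⁴+(5−x)a²+4+2x] − a^x(1−a²)²·x(x+1)(2x+1)/6 + a^x(1−a²)²·x²(x+1)/2 + a^x(x+1)·[(1−x)a⁴+2a²+1+x]. -/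

import Mathlib

/-- The closed-form autocovariance
`R_u(τ) = c_u²σ_e² a^{|τ|} [2/(1−a²)³ + (|τ|−1)/(1−a²)²]`. -/
noncomputable def RuClosed (a cu σe2 : ℝ) (τ : ℤ) : ℝ :=
  cu ^ 2 * σe2 * a ^ τ.natAbs *
    (2 / (1 - a ^ 2) ^ 3 + ((τ.natAbs : ℝ) - 1) / (1 - a ^ 2) ^ 2)

/-- The function `f_Γ` of (73). -/
noncomputable def fGamma (a : ℝ) (x : ℕ) : ℝ :=
  2 * a ^ (x + 2) / (1 - a ^ 2) *
      ((1 - (x : ℝ)) * a ^ 4 + (5 - (x : ℝ)) * a ^ 2 + 4 + 2 * (x : ℝ)) -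
    a ^ x * (1 - a ^ 2) ^ 2 * ((x : ℝ) * ((x : ℝ) + 1) * (2 * (x : ℝ) + 1) / 6) +
    a ^ x * (1 - a ^ 2) ^ 2 * ((x : ℝ) ^ 2 * ((x : ℝ) + 1) / 2) +
    a ^ x * ((x : ℝ) + 1) * ((1 - (x : ℝ)) * a ^ 4 + 2 * a ^ 2 + 1 + (x : ℝ))

open Finset

lemma sum_range_id_real (m : ℕ) : ∑ i ∈ range m, (i:ℝ) = m*(m-1)/2 := by
  induction m with
  | zero => simp
  | succ n ih => rw [sum_range_succ, ih]; push_cast; ring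

lemma sum_range_sq_real (m : ℕ) : ∑ i ∈ range m, (i:ℝ)^2 = m*(m-1)*(2*m-1)/6 := by
  induction m with
  | zero => simp
  | succ n ih => rw [sum_range_succ, ih]; push_cast; ring

lemma hasSum_sq_geom {q : ℝ} (hq : |q| < 1) :
    HasSum (fun n : ℕ => (n:ℝ)^2 * q^n) (q*(1+q)/(1-q)^3) := by
  have hq' : ‖q‖ < 1 := by simpa [Real.norm_eq_abs] using hq
  have hq1 : (1:ℝ) - q ≠ 0 := by
    have : q < 1 := lt_of_le_of_lt (le_abs_self q) hq
    linarith
  have hs : Summable (fun n : ℕ => (n:ℝ)^2 * q^n) :=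
    summable_pow_mul_geometric_of_norm_lt_one 2 hq'
  set T : ℝ := ∑' n : ℕ, (n:ℝ)^2 * q^n with hT
  have hTs : HasSum (fun n : ℕ => (n:ℝ)^2 * q^n) T := hs.hasSum
  have h0 : HasSum (fun n : ℕ => q^n) (1-q)⁻¹ := hasSum_geometric_of_norm_lt_one hq'
  have h1 : HasSum (fun n : ℕ => (n:ℝ) * q^n) (q/(1-q)^2) :=
    hasSum_coe_mul_geometric_of_norm_lt_one hq'
  have hshift : HasSum (fun n : ℕ => ((n+1:ℕ):ℝ)^2 * q^(n+1))
      (q*T + (2*q*(q/(1-q)^2) + q*(1-q)⁻¹)) := by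
    have := (hTs.mul_left q).add ((h1.mul_left (2*q)).add (h0.mul_left q))
    convert this using 1
    · rfl
    funext n
    push_cast
    ring
  have hfull : HasSum (fun n : ℕ => (n:ℝ)^2 * q^n)
      ((q*T + (2*q*(q/(1-q)^2) + q*(1-q)⁻¹)) + ∑ i ∈ range 1, (i:ℝ)^2*q^i) := by
    exact (hasSum_nat_add_iff 1).mp hshift
  have heq : T = q*T + (2*q*(q/(1-q)^2) + q*(1-q)⁻¹) := by
    have := hTs.unique hfull
    simpa using this
  have hTval : T = q*(1+q)/(1-q)^3 := by
    field_simp at heq ⊢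
    have key : (T*(1-q)^3 - q*(1+q)) * (1-q) = 0 := by linear_combination (1-q) * heq
    rcases mul_eq_zero.mp key with h | h
    · linarith
    · exact absurd h hq1
  rw [← hTval]; exact hTs

lemma hasSum_quad_geom {q : ℝ} (hq : |q| < 1) (α β γ : ℝ) :
    HasSum (fun n : ℕ => (α + β*(n:ℝ) + γ*(n:ℝ)^2) * q^n)
      (α*(1-q)⁻¹ + β*(q/(1-q)^2) + γ*(q*(1+q)/(1-q)^3)) := by
  have hq' : ‖q‖ < 1 := by simpa [Real.norm_eq_abs] using hq
  have h0 := (hasSum_geometric_of_norm_lt_one hq').mul_left α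
  have h1 := (hasSum_coe_mul_geometric_of_norm_lt_one hq').mul_left β
  have h2 := (hasSum_sq_geom hq).mul_left γ
  have := (h0.add h1).add h2
  convert this using 1
  · rfl
  funext n
  ring

set_option maxHeartbeats 2000000 in
/-- For `0 < a < 1`, every integer `m ≥ 0` satisfies
`Σ_{τ=−∞}^{∞} R_u(τ) R_u(τ+m) = (c_u⁴σ_e⁴/(1−a²)⁶) f_Γ(m)`. -/
theorem stmt15 (a cu σe2 : ℝ) (ha : 0 < a) (ha1 : a < 1) (hσe2 : 0 < σe2) :
    ∀ m : ℕ,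
      ∑' τ : ℤ, RuClosed a cu σe2 τ * RuClosed a cu σe2 (τ + (m : ℤ)) =
        cu ^ 4 * σe2 ^ 2 / (1 - a ^ 2) ^ 6 * fGamma a m := by
  intro m
  have hD0 : (1:ℝ) - a^2 ≠ 0 := by nlinarith
  have hq' : |a^2| < 1 := by
    rw [abs_of_nonneg (by positivity)]; nlinarith
  set g : ℤ → ℝ := fun τ => RuClosed a cu σe2 τ * RuClosed a cu σe2 (τ + (m:ℤ)) with hg
  -- positive part
  have hpos : HasSum (fun n : ℕ => g (n:ℤ))
      (((cu^2*σe2)^2 * a^m * ((2/(1-a^2)^3 - 1/(1-a^2)^2) * (2/(1-a^2)^3 + ((m:ℝ)-1)/(1-a^2)^2)))*(1-a^2)⁻¹ + ((cu^2*σe2)^2 * a^m * ((2/(1-a^2)^3 - 1/(1-a^2)^2 + (2/(1-a^2)^3 + ((m:ℝ)-1)/(1-a^2)^2))/(1-a^2)^2))*(a^2/(1-a^2)^2) + ((cu^2*σe2)^2 * a^m * (1/(1-a^2)^4))*(a^2*(1+a^2)/(1-a^2)^3)) := by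
    have h := hasSum_quad_geom hq' ((cu^2*σe2)^2 * a^m * ((2/(1-a^2)^3 - 1/(1-a^2)^2) * (2/(1-a^2)^3 + ((m:ℝ)-1)/(1-a^2)^2))) ((cu^2*σe2)^2 * a^m * ((2/(1-a^2)^3 - 1/(1-a^2)^2 + (2/(1-a^2)^3 + ((m:ℝ)-1)/(1-a^2)^2))/(1-a^2)^2)) ((cu^2*σe2)^2 * a^m * (1/(1-a^2)^4))
    convert h using 1
    funext n
    show RuClosed a cu σe2 (n:ℤ) * RuClosed a cu σe2 ((n:ℤ) + (m:ℤ)) = _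
    have h1 : ((n:ℤ)).natAbs = n := Int.natAbs_natCast n
    have h2 : ((n:ℤ)+(m:ℤ)).natAbs = n + m := by omega
    simp only [RuClosed, h1, h2]
    push_cast
    rw [pow_add]
    field_simp
    ring
  -- negative tail
  have htail : HasSum (fun n : ℕ => g (-(((n:ℤ)+(m:ℤ)) + 1)))
      (((cu^2*σe2)^2 * a^(m+2) * ((2/(1-a^2)^3 + (m:ℝ)/(1-a^2)^2) * (2/(1-a^2)^3)))*(1-a^2)⁻¹ + ((cu^2*σe2)^2 * a^(m+2) * ((2/(1-a^2)^3 + (m:ℝ)/(1-a^2)^2 + 2/(1-a^2)^3)/(1-a^2)^2))*(a^2/(1-a^2)^2) + ((cu^2*σe2)^2 * a^(m+2) * (1/(1-a^2)^4))*(a^2*(1+a^2)/(1-a^2)^3)) := by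
    have h := hasSum_quad_geom hq' ((cu^2*σe2)^2 * a^(m+2) * ((2/(1-a^2)^3 + (m:ℝ)/(1-a^2)^2) * (2/(1-a^2)^3))) ((cu^2*σe2)^2 * a^(m+2) * ((2/(1-a^2)^3 + (m:ℝ)/(1-a^2)^2 + 2/(1-a^2)^3)/(1-a^2)^2)) ((cu^2*σe2)^2 * a^(m+2) * (1/(1-a^2)^4))
    convert h using 1
    funext n
    show RuClosed a cu σe2 (-(((n:ℤ)+(m:ℤ))+1)) *
        RuClosed a cu σe2 (-(((n:ℤ)+(m:ℤ))+1) + (m:ℤ)) = _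
    have e2 : (-(((n:ℤ)+(m:ℤ))+1)) + (m:ℤ) = -((n:ℤ)+1) := by ring
    have h1 : (-(((n:ℤ)+(m:ℤ))+1)).natAbs = n + m + 1 := by omega
    have h2 : ((-(((n:ℤ)+(m:ℤ))+1)) + (m:ℤ)).natAbs = n + 1 := by
      rw [e2]; omega
    simp only [RuClosed, h1, h2]
    push_cast
    field_simp
    ring
  -- full negative part
  have hshift : (fun n : ℕ => (fun k : ℕ => g (-((k:ℤ)+1))) (n + m))
      = fun n : ℕ => g (-(((n:ℤ)+(m:ℤ)) + 1)) := by
    funext n; push_cast; ring_nf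
  have hneg : HasSum (fun n : ℕ => g (-((n:ℤ)+1)))
      ((((cu^2*σe2)^2 * a^(m+2) * ((2/(1-a^2)^3 + (m:ℝ)/(1-a^2)^2) * (2/(1-a^2)^3)))*(1-a^2)⁻¹ + ((cu^2*σe2)^2 * a^(m+2) * ((2/(1-a^2)^3 + (m:ℝ)/(1-a^2)^2 + 2/(1-a^2)^3)/(1-a^2)^2))*(a^2/(1-a^2)^2) + ((cu^2*σe2)^2 * a^(m+2) * (1/(1-a^2)^4))*(a^2*(1+a^2)/(1-a^2)^3)) + ∑ i ∈ range m, g (-((i:ℤ)+1))) := by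
    refine (hasSum_nat_add_iff (f := fun n : ℕ => g (-((n:ℤ)+1))) m).mp ?_
    rw [hshift]
    exact htail
  have htot : HasSum g
      ((((cu^2*σe2)^2 * a^m * ((2/(1-a^2)^3 - 1/(1-a^2)^2) * (2/(1-a^2)^3 + ((m:ℝ)-1)/(1-a^2)^2)))*(1-a^2)⁻¹ + ((cu^2*σe2)^2 * a^m * ((2/(1-a^2)^3 - 1/(1-a^2)^2 + (2/(1-a^2)^3 + ((m:ℝ)-1)/(1-a^2)^2))/(1-a^2)^2))*(a^2/(1-a^2)^2) + ((cu^2*σe2)^2 * a^m * (1/(1-a^2)^4))*(a^2*(1+a^2)/(1-a^2)^3)) +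
       ((((cu^2*σe2)^2 * a^(m+2) * ((2/(1-a^2)^3 + (m:ℝ)/(1-a^2)^2) * (2/(1-a^2)^3)))*(1-a^2)⁻¹ + ((cu^2*σe2)^2 * a^(m+2) * ((2/(1-a^2)^3 + (m:ℝ)/(1-a^2)^2 + 2/(1-a^2)^3)/(1-a^2)^2))*(a^2/(1-a^2)^2) + ((cu^2*σe2)^2 * a^(m+2) * (1/(1-a^2)^4))*(a^2*(1+a^2)/(1-a^2)^3)) + ∑ i ∈ range m, g (-((i:ℤ)+1)))) :=
    HasSum.of_nat_of_neg_add_one hpos hneg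
  -- finite middle sum
  have hterm : ∀ i ∈ range m, g (-((i:ℤ)+1)) =
      ((cu^2*σe2)^2 * a^m * (4/(1-a^2)^6 + 2*((m:ℝ)-2)/(1-a^2)^5)) + ((cu^2*σe2)^2 * a^m * (((m:ℝ)-2)/(1-a^2)^4))*(i:ℝ) + (-((cu^2*σe2)^2 * a^m * (1/(1-a^2)^4)))*(i:ℝ)^2 := by
    intro i hi
    have him : i < m := mem_range.mp hi
    show RuClosed a cu σe2 (-((i:ℤ)+1)) * RuClosed a cu σe2 (-((i:ℤ)+1) + (m:ℤ)) = _
    have h1 : (-((i:ℤ)+1)).natAbs = i + 1 := by omega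
    have h2 : ((-((i:ℤ)+1)) + (m:ℤ)).natAbs = m - 1 - i := by omega
    simp only [RuClosed, h1, h2]
    have h3 : ((m - 1 - i : ℕ) : ℝ) = (m:ℝ) - 1 - (i:ℝ) := by
      rw [Nat.cast_sub (by omega), Nat.cast_sub (by omega)]
      push_cast; ring
    have h4 : a^(m-1-i) = a^m / a^(i+1) := by
      rw [eq_div_iff (by positivity), ← pow_add]
      congr 1; omega
    rw [h3, h4]
    have ha0 : a ≠ 0 := ne_of_gt ha
    push_cast
    field_simp
    ring
  have hfin : ∑ i ∈ range m, g (-((i:ℤ)+1)) = (m:ℝ) * ((cu^2*σe2)^2 * a^m * (4/(1-a^2)^6 + 2*((m:ℝ)-2)/(1-a^2)^5)) + ((cu^2*σe2)^2 * a^m * (((m:ℝ)-2)/(1-a^2)^4)) * ((m:ℝ)*((m:ℝ)-1)/2) + (-((cu^2*σe2)^2 * a^m * (1/(1-a^2)^4))) * ((m:ℝ)*((m:ℝ)-1)*(2*(m:ℝ)-1)/6) := by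
    rw [Finset.sum_congr rfl hterm]
    simp only [Finset.sum_add_distrib, ← Finset.mul_sum, Finset.sum_const,
      Finset.card_range, nsmul_eq_mul, sum_range_id_real, sum_range_sq_real]
    ring
  rw [htot.tsum_eq, hfin]
  simp only [fGamma]
  rw [show m + 2 = m + 2 from rfl, pow_add]
  field_simp
  ring
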